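/- Every graph G with tree-partition-width tpw(G) has track-number tn(G) ≤ 3·tpw(G). -/

import Mathlib

open SimpleGraph

/-- A (proper) track layout of the graph `G` with `t` tracks.
`track v` is the track (colour class) of vertex `v`, and `pos v` gives the
position of `v` in the total order of its track. -/
structure TrackLayout (V : Type) (G : SimpleGraph V) (t : ℕ) where
  /-- the track containing each vertex -/
  track : V → Fin t
  /-- the position of each vertex within its track -/
  pos : V → ℕ
  /-- distinct vertices on a common track occupy distinct positions -/
  inj : ∀ v w : V, track v = track w → pos v = pos w → v = w
  /-- the tracks form a proper vertex colouring -/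
  proper : ∀ v w : V, G.Adj v w → track v ≠ track w
  /-- no X-crossing: there are no edges `vw` and `xy` with `v, x` on one track,
  `w, y` on another track, `v <ᵢ x` and `y <ⱼ w` -/
  noX : ∀ v w x y : V, G.Adj v w → G.Adj x y →
    track v = track x → track w = track y → track v ≠ track w →
    pos v < pos x → pos y < pos w → False
/-- The track-number of `G`: the minimum `t` such that `G` has a `t`-track layout. -/
noncomputable def trackNumber (V : Type) (G : SimpleGraph V) : ℕ :=
  sInf {t : ℕ | Nonempty (TrackLayout V G t)}
/-- A tree-partition of `G`: a (finite) tree together with a partition of `V` into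
bags indexed by the nodes of the tree, such that every edge of `G` is either inside
a single bag or between two bags whose nodes are adjacent in the tree. -/
structure TreePartition (V : Type) (G : SimpleGraph V) where
  /-- the index type of the nodes of the tree -/
  ι : Type
  finι : Fintype ι
  /-- the tree -/
  tree : SimpleGraph ι
  isTree : tree.IsTree
  /-- the bags -/
  bag : ι → Set V
  partition : ∀ v : V, ∃! x : ι, v ∈ bag x
  edgeOK : ∀ v w : V, G.Adj v w →
    (∃ x : ι, v ∈ bag x ∧ w ∈ bag x) ∨
    (∃ x y : ι, tree.Adj x y ∧ v ∈ bag x ∧ w ∈ bag y)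

/-- The tree-partition-width of `G`: the minimum, over all tree-partitions of `G`,
of the maximum bag size. -/
noncomputable def treePartitionWidth (V : Type) (G : SimpleGraph V) : ℕ :=
  sInf {w : ℕ | ∃ P : TreePartition V G, ∀ x : P.ι, (P.bag x).ncard ≤ w}


open SimpleGraph

namespace TrackAux

variable {ι : Type} [DecidableEq ι] (T : SimpleGraph ι) (hT : T.IsTree) (r : ι)

include hT

omit hT in
lemma concat_isPath {a y : ι} {p : T.Walk r a} (hp : p.IsPath) (h : T.Adj a y)
    (hy : y ∉ p.support) : (p.concat h).IsPath := by
  rw [← Walk.isPath_reverse_iff, Walk.reverse_concat]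
  exact (Walk.cons_isPath_iff _ _).2 ⟨hp.reverse, by rwa [Walk.support_reverse, List.mem_reverse]⟩

lemma dist_ne_of_adj {a b : ι} (h : T.Adj a b) : T.dist r a ≠ T.dist r b := by
  intro heq
  obtain ⟨p, hp, hpl⟩ := hT.isConnected.exists_path_of_dist r a
  obtain ⟨q, hq, hql⟩ := hT.isConnected.exists_path_of_dist r b
  have hbp : b ∉ p.support := by
    intro hb
    have h2 : p.takeUntil b hb = q :=
      congrArg Subtype.val (hT.IsAcyclic.path_unique ⟨p.takeUntil b hb, hp.takeUntil hb⟩ ⟨q, hq⟩)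
    have h4 := congrArg Walk.length (p.take_spec hb)
    rw [Walk.length_append, h2, hql, hpl, heq] at h4
    exact h.ne (Walk.eq_of_length_eq_zero (by omega : (p.dropUntil b hb).length = 0)).symm
  have hcp : (p.concat h).IsPath := concat_isPath T r hp h hbp
  have h5 : p.concat h = q :=
    congrArg Subtype.val (hT.IsAcyclic.path_unique ⟨p.concat h, hcp⟩ ⟨q, hq⟩)
  have h6 := congrArg Walk.length h5
  rw [Walk.length_concat, hpl, hql, heq] at h6
  omega

lemma adj_step {a b : ι} (h : T.Adj a b) :
    T.dist r b = T.dist r a + 1 ∨ T.dist r a = T.dist r b + 1 := by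
  have h1 : T.dist r b ≤ T.dist r a + 1 := by
    have ht := hT.isConnected.dist_triangle (u := r) (v := a) (w := b)
    have hd : T.dist a b ≤ 1 := by simpa using SimpleGraph.dist_le h.toWalk
    omega
  have h2 : T.dist r a ≤ T.dist r b + 1 := by
    have ht := hT.isConnected.dist_triangle (u := r) (v := b) (w := a)
    have hd : T.dist b a ≤ 1 := by simpa using SimpleGraph.dist_le h.symm.toWalk
    omega
  have h3 := dist_ne_of_adj T hT r h
  omega

noncomputable def spath (x : ι) : T.Walk r x :=
  (hT.isConnected.exists_path_of_dist r x).choose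

lemma spath_isPath (x : ι) : (spath T hT r x).IsPath :=
  (hT.isConnected.exists_path_of_dist r x).choose_spec.1

lemma spath_length (x : ι) : (spath T hT r x).length = T.dist r x :=
  (hT.isConnected.exists_path_of_dist r x).choose_spec.2

noncomputable def parent (x : ι) : ι := (spath T hT r x).getVert (T.dist r x - 1)

lemma adj_parent {x : ι} (hx : x ≠ r) : T.Adj (parent T hT r x) x := by
  have hd : 0 < T.dist r x := hT.isConnected.pos_dist_of_ne (Ne.symm hx)
  have h1 : T.dist r x - 1 < (spath T hT r x).length := by rw [spath_length]; omega
  have h2 := (spath T hT r x).adj_getVert_succ h1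
  have h3 : T.dist r x - 1 + 1 = T.dist r x := by omega
  have h4 : (spath T hT r x).getVert (T.dist r x) = x := by
    rw [← spath_length T hT r]; exact Walk.getVert_length _
  rw [h3, h4] at h2
  exact h2

lemma depth_parent {x : ι} (hx : x ≠ r) : T.dist r (parent T hT r x) + 1 = T.dist r x := by
  have hadj := adj_parent T hT r hx
  have hne := dist_ne_of_adj T hT r hadj
  have hub : T.dist r (parent T hT r x) ≤ T.dist r x := by
    have hm : parent T hT r x ∈ (spath T hT r x).support := by
      rw [Walk.mem_support_iff_exists_getVert]
      exact ⟨T.dist r x - 1, rfl, by rw [spath_length]; omega⟩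
    have h1 := SimpleGraph.dist_le ((spath T hT r x).takeUntil _ hm)
    have h2 := Walk.length_takeUntil_le (spath T hT r x) hm
    rw [spath_length] at h2
    omega
  have hlb : T.dist r x ≤ T.dist r (parent T hT r x) + 1 := by
    have h1 := hT.isConnected.dist_triangle (u := r) (v := parent T hT r x) (w := x)
    have h2 : T.dist (parent T hT r x) x ≤ 1 := by simpa using SimpleGraph.dist_le hadj.toWalk
    omega
  omega

lemma lower_unique {a b y : ι} (ha : T.Adj a y) (hb : T.Adj b y)
    (hda : T.dist r a + 1 = T.dist r y) (hdb : T.dist r b + 1 = T.dist r y) : a = b := by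
  obtain ⟨p, hp, hpl⟩ := hT.isConnected.exists_path_of_dist r a
  obtain ⟨q, hq, hql⟩ := hT.isConnected.exists_path_of_dist r b
  have hyp : y ∉ p.support := by
    intro hy
    have h1 := SimpleGraph.dist_le (p.takeUntil y hy)
    have h2 := Walk.length_takeUntil_le p hy
    omega
  have hyq : y ∉ q.support := by
    intro hy
    have h1 := SimpleGraph.dist_le (q.takeUntil y hy)
    have h2 := Walk.length_takeUntil_le q hy
    omega
  have heq : p.concat ha = q.concat hb :=
    congrArg Subtype.val (hT.IsAcyclic.path_unique
      ⟨p.concat ha, concat_isPath T r hp ha hyp⟩ ⟨q.concat hb, concat_isPath T r hq hb hyq⟩)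
  exact (Walk.concat_inj heq).1

lemma parent_eq {x y : ι} (h : T.Adj x y) (hd : T.dist r x + 1 = T.dist r y) :
    parent T hT r y = x := by
  have hy : y ≠ r := by
    intro h'
    subst h'
    rw [SimpleGraph.dist_self] at hd
    omega
  exact lower_unique T hT r (adj_parent T hT r hy) h (depth_parent T hT r hy) hd

variable (e : ι → ℕ)

open Classical in
noncomputable def key (x : ι) : List ℕ :=
  if h : x = r then [] else key (parent T hT r x) ++ [e x]
termination_by T.dist r x
decreasing_by
  have := depth_parent T hT r h
  omega

lemma key_root : key T hT r e r = [] := by rw [key]; simp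

lemma key_of_ne {x : ι} (h : x ≠ r) :
    key T hT r e x = key T hT r e (parent T hT r x) ++ [e x] := by
  rw [key]; simp [h]

lemma key_length (x : ι) : (key T hT r e x).length = T.dist r x := by
  suffices H : ∀ n x, T.dist r x = n → (key T hT r e x).length = n from H _ x rfl
  intro n
  induction n using Nat.strong_induction_on with
  | _ n ih =>
    intro x hx
    by_cases h : x = r
    · subst h
      rw [key_root]
      rw [SimpleGraph.dist_self] at hx
      simp only [List.length_nil]; omega
    · have hp := depth_parent T hT r h
      rw [key_of_ne T hT r e h, List.length_append]
      have := ih (T.dist r (parent T hT r x)) (by omega) _ rfl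
      simp [this]; omega

lemma key_inj (he : Function.Injective e) {a b : ι}
    (h : key T hT r e a = key T hT r e b) : a = b := by
  by_cases ha : a = r <;> by_cases hb : b = r
  · rw [ha, hb]
  · rw [ha, key_root, key_of_ne T hT r e hb] at h
    simp at h
  · rw [hb, key_root, key_of_ne T hT r e ha] at h
    simp at h
  · rw [key_of_ne T hT r e ha, key_of_ne T hT r e hb,
      ← List.concat_eq_append, ← List.concat_eq_append] at h
    exact he (List.concat_inj.mp h).2

omit hT in
lemma lex_asymm {l₁ l₂ : List ℕ} (h1 : List.Lex (· < ·) l₁ l₂)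
    (h2 : List.Lex (· < ·) l₂ l₁) : False :=
  (irrefl l₁ : ¬ List.Lex (· < ·) l₁ l₁) (List.lex_trans Nat.lt_trans h1 h2)

omit hT in
lemma lex_append_last {l₁ l₂ : List ℕ} (h : List.Lex (· < ·) l₁ l₂)
    (hl : l₁.length = l₂.length) (a b : ℕ) :
    List.Lex (· < ·) (l₁ ++ [a]) (l₂ ++ [b]) := by
  induction h with
  | nil => simp at hl
  | @cons x l₁ l₂ h ih => exact List.Lex.cons (ih (by simpa using hl))
  | rel h => exact List.Lex.rel h

def nlt (a b : ι) : Prop :=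
  T.dist r a < T.dist r b ∨
    (T.dist r a = T.dist r b ∧ List.Lex (· < ·) (key T hT r e a) (key T hT r e b))

lemma nlt_trans {a b c : ι} (h1 : nlt T hT r e a b) (h2 : nlt T hT r e b c) :
    nlt T hT r e a c := by
  rcases h1 with h1 | ⟨h1, h1'⟩ <;> rcases h2 with h2 | ⟨h2, h2'⟩
  · exact Or.inl (h1.trans h2)
  · exact Or.inl (by omega)
  · exact Or.inl (by omega)
  · exact Or.inr ⟨h1.trans h2, List.lex_trans Nat.lt_trans h1' h2'⟩

lemma nlt_irrefl (a : ι) : ¬ nlt T hT r e a a := by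
  rintro (h | ⟨-, h⟩)
  · omega
  · exact (irrefl _ : ¬ List.Lex (· < ·) (key T hT r e a) (key T hT r e a)) h

lemma nlt_trich (he : Function.Injective e) (a b : ι) :
    nlt T hT r e a b ∨ a = b ∨ nlt T hT r e b a := by
  rcases Nat.lt_trichotomy (T.dist r a) (T.dist r b) with h | h | h
  · exact Or.inl (Or.inl h)
  · rcases trichotomous_of (List.Lex (· < · : ℕ → ℕ → Prop)) (key T hT r e a) (key T hT r e b)
      with hl | hl | hl
    · exact Or.inl (Or.inr ⟨h, hl⟩)
    · exact Or.inr (Or.inl (key_inj T hT r e he hl))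
    · exact Or.inr (Or.inr (Or.inr ⟨h.symm, hl⟩))
  · exact Or.inr (Or.inr (Or.inl h))

noncomputable def rank (x : ι) : ℕ := {y | nlt T hT r e y x}.ncard

lemma rank_lt_rank [Finite ι] {a b : ι} (h : nlt T hT r e a b) :
    rank T hT r e a < rank T hT r e b := by
  apply Set.ncard_lt_ncard _ (Set.toFinite _)
  constructor
  · intro y hy
    exact nlt_trans T hT r e hy h
  · intro hsub
    exact nlt_irrefl T hT r e a (hsub h)

lemma rank_reflect [Finite ι] (he : Function.Injective e) {a b : ι}
    (h : rank T hT r e a < rank T hT r e b) : nlt T hT r e a b := by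
  rcases nlt_trich T hT r e he a b with h1 | h1 | h1
  · exact h1
  · subst h1; omega
  · have := rank_lt_rank T hT r e h1
    omega

end TrackAux

open TrackAux in
lemma exists_trackLayout {V : Type} [Fintype V] (G : SimpleGraph V) (P : TreePartition V G)
    (k : ℕ) (hbag : ∀ x : P.ι, (P.bag x).ncard ≤ k) : Nonempty (TrackLayout V G (3 * k)) := by
  classical
  haveI := P.finι
  set T := P.tree with hTdef
  have hT : T.IsTree := P.isTree
  obtain ⟨r⟩ : Nonempty P.ι := hT.isConnected.nonempty
  -- the bag containing each vertex
  let node : V → P.ι := fun v => (P.partition v).choose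
  have hnode : ∀ v, v ∈ P.bag (node v) := fun v => (P.partition v).choose_spec.1
  have node_eq : ∀ v x, v ∈ P.bag x → x = node v := fun v x hv => (P.partition v).choose_spec.2 x hv
  -- embedding of each bag into `Fin k`
  have hemb : ∀ x : P.ι, Nonempty (P.bag x ↪ Fin k) := by
    intro x
    have h1 := hbag x
    rw [← Nat.card_coe_set_eq, Nat.card_eq_fintype_card] at h1
    exact Function.Embedding.nonempty_of_card_le (by simpa using h1)
  let emb : ∀ x : P.ι, P.bag x ↪ Fin k := fun x => (hemb x).some
  let e : P.ι → ℕ := fun x => (Fintype.equivFin P.ι x : ℕ)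
  have he : Function.Injective e := fun a b h =>
    (Fintype.equivFin P.ι).injective (Fin.val_injective h)
  let idx : V → Fin k := fun v => emb (node v) ⟨v, hnode v⟩
  have embcongr : ∀ (x y : P.ι) (hxy : x = y) (u : V) (hu : u ∈ P.bag x),
      (emb x ⟨u, hu⟩ : Fin k) = emb y ⟨u, hxy ▸ hu⟩ := by
    rintro x y rfl u hu; rfl
  have idx_inj : ∀ v w : V, node v = node w → idx v = idx w → v = w := by
    intro v w hnw hi
    have h2 : (emb (node w)) ⟨w, hnode w⟩ = emb (node v) ⟨w, hnw.symm ▸ hnode w⟩ :=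
      embcongr (node w) (node v) hnw.symm w (hnode w)
    have h3 : (⟨v, hnode v⟩ : P.bag (node v)) = ⟨w, hnw.symm ▸ hnode w⟩ :=
      (emb (node v)).injective (hi.trans h2)
    exact congrArg Subtype.val h3
  refine ⟨{
    track := fun v => ⟨3 * (idx v : ℕ) + T.dist r (node v) % 3, by
      have h1 := (idx v).isLt
      have h2 : T.dist r (node v) % 3 < 3 := Nat.mod_lt _ (by norm_num)
      omega⟩,
    pos := fun v => rank T hT r e (node v),
    inj := ?_, proper := ?_, noX := ?_ }⟩
  · -- inj
    intro v w htr hpos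
    have hnvw : node v = node w := by
      rcases nlt_trich T hT r e he (node v) (node w) with h | h | h
      · have := rank_lt_rank T hT r e h
        omega
      · exact h
      · have := rank_lt_rank T hT r e h
        omega
    have hval : 3 * (idx v : ℕ) + T.dist r (node v) % 3
        = 3 * (idx w : ℕ) + T.dist r (node w) % 3 := congrArg Fin.val htr
    have m1 : T.dist r (node v) % 3 < 3 := Nat.mod_lt _ (by norm_num)
    have m2 : T.dist r (node w) % 3 < 3 := Nat.mod_lt _ (by norm_num)
    have : (idx v : ℕ) = idx w := by omega
    exact idx_inj v w hnvw (Fin.val_injective this)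
  · -- proper
    intro v w hadj htr
    have hval : 3 * (idx v : ℕ) + T.dist r (node v) % 3
        = 3 * (idx w : ℕ) + T.dist r (node w) % 3 := congrArg Fin.val htr
    have m1 : T.dist r (node v) % 3 < 3 := Nat.mod_lt _ (by norm_num)
    have m2 : T.dist r (node w) % 3 < 3 := Nat.mod_lt _ (by norm_num)
    rcases P.edgeOK v w hadj with ⟨a, hva, hwa⟩ | ⟨a, b, hab, hva, hwb⟩
    · have h1 : node v = node w := (node_eq v a hva).symm.trans (node_eq w a hwa)
      have h2 : (idx v : ℕ) = idx w := by rw [h1] at hval; omega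
      exact hadj.ne (idx_inj v w h1 (Fin.val_injective h2))
    · have h1 : a = node v := node_eq v a hva
      have h2 : b = node w := node_eq w b hwb
      have hadj' : T.Adj (node v) (node w) := by rw [← h1, ← h2]; exact hab
      rcases adj_step T hT r hadj' with h3 | h3 <;> omega
  · -- noX
    intro v w x y hvw hxy htvx htwy htvw hpvx hpyw
    have Hvx : 3 * (idx v : ℕ) + T.dist r (node v) % 3
        = 3 * (idx x : ℕ) + T.dist r (node x) % 3 := congrArg Fin.val htvx
    have Hwy : 3 * (idx w : ℕ) + T.dist r (node w) % 3
        = 3 * (idx y : ℕ) + T.dist r (node y) % 3 := congrArg Fin.val htwy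
    have m1 : T.dist r (node v) % 3 < 3 := Nat.mod_lt _ (by norm_num)
    have m2 : T.dist r (node w) % 3 < 3 := Nat.mod_lt _ (by norm_num)
    have m3 : T.dist r (node x) % 3 < 3 := Nat.mod_lt _ (by norm_num)
    have m4 : T.dist r (node y) % 3 < 3 := Nat.mod_lt _ (by norm_num)
    have mod_vx : T.dist r (node v) % 3 = T.dist r (node x) % 3 := by omega
    have mod_wy : T.dist r (node w) % 3 = T.dist r (node y) % 3 := by omega
    have nvx : nlt T hT r e (node v) (node x) := by
      apply rank_reflect T hT r e he
      simpa using hpvx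
    have nyw : nlt T hT r e (node y) (node w) := by
      apply rank_reflect T hT r e he
      simpa using hpyw
    rcases P.edgeOK v w hvw with ⟨a, hva, hwa⟩ | ⟨a, b, hab, hva, hwb⟩
    · rcases P.edgeOK x y hxy with ⟨c, hxc, hyc⟩ | ⟨c, d, hcd, hxc, hyd⟩
      · -- both intra-bag
        have h1 : node v = node w := (node_eq v a hva).symm.trans (node_eq w a hwa)
        have h2 : node x = node y := (node_eq x c hxc).symm.trans (node_eq y c hyc)
        rw [h1, h2] at nvx
        exact nlt_irrefl T hT r e _ (nlt_trans T hT r e nvx nyw)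
      · -- vw intra-bag, xy inter-bag
        have h1 : node v = node w := (node_eq v a hva).symm.trans (node_eq w a hwa)
        have hadj' : T.Adj (node x) (node y) := by
          rw [← node_eq x c hxc, ← node_eq y d hyd]; exact hcd
        rw [h1] at mod_vx
        rcases adj_step T hT r hadj' with h3 | h3 <;> omega
    · rcases P.edgeOK x y hxy with ⟨c, hxc, hyc⟩ | ⟨c, d, hcd, hxc, hyd⟩
      · -- vw inter-bag, xy intra-bag
        have h2 : node x = node y := (node_eq x c hxc).symm.trans (node_eq y c hyc)
        have hadj' : T.Adj (node v) (node w) := by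
          rw [← node_eq v a hva, ← node_eq w b hwb]; exact hab
        rw [h2] at mod_vx
        rcases adj_step T hT r hadj' with h3 | h3 <;> omega
      · -- both inter-bag
        have hadjvw : T.Adj (node v) (node w) := by
          rw [← node_eq v a hva, ← node_eq w b hwb]; exact hab
        have hadjxy : T.Adj (node x) (node y) := by
          rw [← node_eq x c hxc, ← node_eq y d hyd]; exact hcd
        have hsv := adj_step T hT r hadjvw
        have hsx := adj_step T hT r hadjxy
        have hy_le : T.dist r (node y) ≤ T.dist r (node w) := by
          rcases nyw with h | ⟨h, -⟩ <;> omega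
        rcases nvx with hlt | ⟨hdeq, hlex1⟩
        · rcases hsv with h1 | h1 <;> rcases hsx with h2 | h2 <;> omega
        · have hwy_eq : T.dist r (node w) = T.dist r (node y) := by
            rcases hsv with h1 | h1 <;> rcases hsx with h2 | h2 <;> omega
          have hlex2 : List.Lex (· < ·) (key T hT r e (node y)) (key T hT r e (node w)) := by
            rcases nyw with h | ⟨-, h⟩
            · omega
            · exact h
          have hkl : (key T hT r e (node v)).length = (key T hT r e (node x)).length := by
            rw [key_length, key_length]; omega
          rcases hsv with h1 | h1
          · -- w and y are children of v and x
            have hx2 : T.dist r (node y) = T.dist r (node x) + 1 := by omega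
            have hw_ne : node w ≠ r := by
              intro hh; rw [hh, SimpleGraph.dist_self] at h1; omega
            have hy_ne : node y ≠ r := by
              intro hh; rw [hh, SimpleGraph.dist_self] at hx2; omega
            have pyv : parent T hT r (node w) = node v := parent_eq T hT r hadjvw (by omega)
            have pxy : parent T hT r (node y) = node x := parent_eq T hT r hadjxy (by omega)
            have ew : key T hT r e (node w) = key T hT r e (node v) ++ [e (node w)] := by
              rw [key_of_ne T hT r e hw_ne, pyv]
            have ey : key T hT r e (node y) = key T hT r e (node x) ++ [e (node y)] := by
              rw [key_of_ne T hT r e hy_ne, pxy]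
            have hlex3 : List.Lex (· < ·) (key T hT r e (node w)) (key T hT r e (node y)) := by
              rw [ew, ey]; exact lex_append_last hlex1 hkl _ _
            exact lex_asymm hlex3 hlex2
          · -- v and x are children of w and y
            have hx2 : T.dist r (node x) = T.dist r (node y) + 1 := by omega
            have hv_ne : node v ≠ r := by
              intro hh; rw [hh, SimpleGraph.dist_self] at h1; omega
            have hx_ne : node x ≠ r := by
              intro hh; rw [hh, SimpleGraph.dist_self] at hx2; omega
            have pwv : parent T hT r (node v) = node w := parent_eq T hT r hadjvw.symm (by omega)
            have pyx : parent T hT r (node x) = node y := parent_eq T hT r hadjxy.symm (by omega)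
            have ev : key T hT r e (node v) = key T hT r e (node w) ++ [e (node v)] := by
              rw [key_of_ne T hT r e hv_ne, pwv]
            have ex : key T hT r e (node x) = key T hT r e (node y) ++ [e (node x)] := by
              rw [key_of_ne T hT r e hx_ne, pyx]
            have hkl2 : (key T hT r e (node y)).length = (key T hT r e (node w)).length := by
              rw [key_length, key_length]; omega
            have hlex3 : List.Lex (· < ·) (key T hT r e (node x)) (key T hT r e (node v)) := by
              rw [ev, ex]; exact lex_append_last hlex2 hkl2 _ _
            exact lex_asymm hlex3 hlex1

/-- Every graph `G` with tree-partition-width `tpw(G)` has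
track-number `tn(G) ≤ 3 ⬝ tpw(G)`. -/
theorem trackNumber_le_three_treePartitionWidth {V : Type} [Fintype V]
    (G : SimpleGraph V) :
    trackNumber V G ≤ 3 * treePartitionWidth V G := by
  classical
  have hP0 : ∃ P : TreePartition V G, ∀ x : P.ι, (P.bag x).ncard ≤ Fintype.card V := by
    refine ⟨⟨Unit, inferInstance, ⊥, ⟨?_, ?_⟩, fun _ => Set.univ,
      fun v => ⟨(), trivial, fun y _ => Subsingleton.elim y ()⟩,
      fun v w _ => Or.inl ⟨(), trivial, trivial⟩⟩, ?_⟩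
    · rw [SimpleGraph.connected_iff]
      exact ⟨fun u v => by rw [Subsingleton.elim u v], ⟨()⟩⟩
    · intro v c hc
      cases c with
      | nil => exact hc.ne_nil rfl
      | cons h p => simp at h
    · intro x
      rw [Set.ncard_univ, Nat.card_eq_fintype_card]
  have hne : Set.Nonempty {w : ℕ | ∃ P : TreePartition V G, ∀ x : P.ι, (P.bag x).ncard ≤ w} :=
    ⟨_, hP0⟩
  obtain ⟨P, hP⟩ := Nat.sInf_mem hne
  exact Nat.sInf_le (exists_trackLayout G P _ hP)
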